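/- Let N ≥ 3, 3 ≤ b ≤ N, and n ≥ 2, and let I_1,…,I_n be independent, each uniformly distributed over the b-element subsets of a fixed N-element set. Then Pr[there exist i ≠ j with |I_i ∩ I_j| ≥ 3] ≤ C(n,2) · C(b,3) · (b/(N−2))³, where C(·,·) denotes the binomial coefficient. -/

import Mathlib

open Finset

lemma count_supersets (N b : ℕ) (T : Finset (Fin N)) (hT : T.card ≤ b) :
    ((univ : Finset {s : Finset (Fin N) // s.card = b}).filter
        (fun A => T ⊆ A.1)).card = (N - T.card).choose (b - T.card) := by
  have h1 : ((univ : Finset {s : Finset (Fin N) // s.card = b}).filter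
      (fun A => T ⊆ A.1)).card
      = (((univ : Finset (Fin N)).powersetCard b).filter (fun A => T ⊆ A)).card := by
    apply card_nbij (fun A => A.1)
    · intro A hA
      simp only [mem_coe, mem_filter, mem_powersetCard, mem_univ, true_and] at *
      exact ⟨⟨subset_univ _, A.2⟩, hA⟩
    · intro A hA B hB h
      exact Subtype.ext h
    · intro A hA
      simp only [coe_filter, Set.mem_setOf_eq, mem_powersetCard, Set.mem_image,
        mem_coe, mem_filter, mem_univ, true_and] at *
      exact ⟨⟨A, hA.1.2⟩, hA.2, rfl⟩
  have h2 : (((univ : Finset (Fin N)).powersetCard b).filter (fun A => T ⊆ A)).card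
      = (((univ : Finset (Fin N)) \ T).powersetCard (b - T.card)).card := by
    apply card_nbij' (fun A => A \ T) (fun B => B ∪ T)
    · intro A hA
      simp only [mem_coe, mem_filter, mem_powersetCard, mem_univ, true_and] at hA ⊢
      refine ⟨sdiff_subset_sdiff (subset_univ _) Subset.rfl, ?_⟩
      rw [card_sdiff_of_subset hA.2, hA.1.2]
    · intro B hB
      rw [mem_coe, mem_powersetCard] at hB
      have hdisj : Disjoint B T := disjoint_of_subset_left hB.1 sdiff_disjoint
      simp only [mem_coe, mem_filter, mem_powersetCard, mem_univ, true_and]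
      refine ⟨⟨subset_univ _, ?_⟩, subset_union_right⟩
      rw [card_union_of_disjoint hdisj, hB.2, Nat.sub_add_cancel hT]
    · intro A hA
      simp only [mem_coe, mem_filter, mem_powersetCard] at hA
      exact sdiff_union_of_subset hA.2
    · intro B hB
      rw [mem_coe, mem_powersetCard] at hB
      have hdisj : Disjoint B T := disjoint_of_subset_left hB.1 sdiff_disjoint
      dsimp only
      rw [union_sdiff_distrib, sdiff_self]
      simpa using Finset.sdiff_eq_self_iff_disjoint.2 hdisj
  rw [h1, h2, card_powersetCard, card_sdiff_of_subset (subset_univ _), card_univ, Fintype.card_fin]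

lemma count_pair (N b n : ℕ) (i j : Fin n) (hij : i ≠ j) (T : Finset (Fin N)) :
    ((univ : Finset (Fin n → {s : Finset (Fin N) // s.card = b})).filter
        (fun I => T ⊆ (I i).1 ∧ T ⊆ (I j).1)).card
      = ((univ : Finset {s : Finset (Fin N) // s.card = b}).filter
          (fun A => T ⊆ A.1)).card ^ 2 * (N.choose b) ^ (n - 2) := by
  classical
  set M := ((univ : Finset {s : Finset (Fin N) // s.card = b}).filter
      (fun A => T ⊆ A.1)).card with hM
  have hset : ((univ : Finset (Fin n → {s : Finset (Fin N) // s.card = b})).filter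
        (fun I => T ⊆ (I i).1 ∧ T ⊆ (I j).1))
      = Fintype.piFinset (fun k => if k = i ∨ k = j then
          ((univ : Finset {s : Finset (Fin N) // s.card = b}).filter (fun A => T ⊆ A.1))
        else univ) := by
    ext I
    simp only [mem_filter, mem_univ, true_and, Fintype.mem_piFinset]
    constructor
    · rintro ⟨h1, h2⟩ k
      by_cases hk : k = i ∨ k = j
      · rw [if_pos hk]
        simp only [mem_filter, mem_univ, true_and]
        rcases hk with rfl | rfl <;> assumption
      · rw [if_neg hk]; exact mem_univ _
    · intro h
      constructor
      · have := h i; rw [if_pos (Or.inl rfl)] at this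
        simpa using this
      · have := h j; rw [if_pos (Or.inr rfl)] at this
        simpa using this
  rw [hset, Fintype.card_piFinset]
  have : ∀ k : Fin n, (if k = i ∨ k = j then
          ((univ : Finset {s : Finset (Fin N) // s.card = b}).filter (fun A => T ⊆ A.1))
        else univ).card = if k ∈ ({i, j} : Finset (Fin n)) then M else N.choose b := by
    intro k
    by_cases hk : k = i ∨ k = j
    · rw [if_pos hk, if_pos (by simp [hk])]
    · rw [if_neg hk, if_neg (by simp only [mem_insert, mem_singleton]; exact hk), card_univ,
        Fintype.card_finset_len, Fintype.card_fin]
  rw [Finset.prod_congr rfl (fun k _ => this k), Finset.prod_ite, Finset.prod_const,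
    Finset.prod_const]
  congr 1
  · congr 1
    rw [Finset.filter_mem_eq_inter, univ_inter, card_insert_of_notMem (by simpa using hij),
      card_singleton]
  · congr 1
    rw [Finset.filter_not, Finset.filter_mem_eq_inter, univ_inter, card_sdiff_of_subset (subset_univ _),
      card_univ, Fintype.card_fin, card_insert_of_notMem (by simpa using hij), card_singleton]

lemma six_choose_three (b : ℕ) (hb : 3 ≤ b) :
    6 * b.choose 3 = b * (b - 1) * (b - 2) := by
  have := Nat.descFactorial_eq_factorial_mul_choose b 3
  simp [Nat.descFactorial_succ, Nat.descFactorial_zero, Nat.factorial] at this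
  ring_nf at this ⊢
  omega

lemma six_choose_three_real (b : ℕ) (hb : 3 ≤ b) :
    (6:ℝ) * (b.choose 3 : ℝ) = (b:ℝ) * ((b:ℝ) - 1) * ((b:ℝ) - 2) := by
  have h := six_choose_three b hb
  have : ((6 * b.choose 3 : ℕ) : ℝ) = ((b * (b - 1) * (b - 2) : ℕ) : ℝ) := by
    exact_mod_cast congrArg (Nat.cast : ℕ → ℝ) h
  push_cast at this
  rw [Nat.cast_sub (by omega : 1 ≤ b), Nat.cast_sub (by omega : 2 ≤ b)] at this
  push_cast at this
  linarith

lemma final_real_ineq (nc3 bc3 m c x B : ℝ) (hc : 0 < c) (hx : 0 < x) (hm : 0 ≤ m)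
    (hB : 3 ≤ B) (e1 : nc3 * m = c * bc3) (e2 : 6 * bc3 = B * (B - 1) * (B - 2))
    (e3 : 6 * nc3 = (x + 2) * (x + 1) * x) :
    nc3 * m ^ 2 / c ^ 2 ≤ bc3 * (B ^ 3 / x ^ 3) := by
  have hx2 : (0:ℝ) < (x + 2) * (x + 1) * x := by positivity
  have hB2 : (0:ℝ) < B * (B - 1) * (B - 2) :=
    mul_pos (mul_pos (by linarith) (by linarith)) (by linarith)
  have hnc3 : 0 ≤ nc3 := by nlinarith
  have hbc3 : 0 ≤ bc3 := by nlinarith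
  have h4 : (x + 2) * (x + 1) * x * m = c * (B * (B - 1) * (B - 2)) := by
    linear_combination (-m) * e3 + 6 * e1 + c * e2
  have hbfac : 0 < B * (B - 1) * (B - 2) := hB2
  have hm3 : m * x ^ 3 ≤ B ^ 3 * c := by
    have h5 : x ^ 2 ≤ (x + 2) * (x + 1) := by nlinarith
    have h6 : (B - 1) * (B - 2) ≤ B ^ 2 := by nlinarith
    have step : m * x ^ 3 * (B * (B - 1) * (B - 2))
        ≤ B ^ 3 * c * (B * (B - 1) * (B - 2)) := by
      calc m * x ^ 3 * (B * (B - 1) * (B - 2))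
          = (x ^ 2 * ((B - 1) * (B - 2))) * (x * B * m) := by ring
        _ ≤ ((x + 2) * (x + 1) * B ^ 2) * (x * B * m) := by
            apply mul_le_mul_of_nonneg_right _ (by positivity)
            calc x ^ 2 * ((B - 1) * (B - 2)) ≤ ((x + 2) * (x + 1)) * B ^ 2 := by
                  apply mul_le_mul h5 h6 (by nlinarith) (by nlinarith)
              _ = (x + 2) * (x + 1) * B ^ 2 := by ring
        _ = B ^ 3 * ((x + 2) * (x + 1) * x * m) := by ring
        _ = B ^ 3 * c * (B * (B - 1) * (B - 2)) := by rw [h4]; ring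
    exact le_of_mul_le_mul_right step hbfac
  rw [← mul_div_assoc, div_le_div_iff₀ (by positivity) (by positivity)]
  calc nc3 * m ^ 2 * x ^ 3 = nc3 * m * (m * x ^ 3) := by ring
    _ ≤ nc3 * m * (B ^ 3 * c) := mul_le_mul_of_nonneg_left hm3 (by positivity)
    _ = (c * bc3) * (B ^ 3 * c) := by rw [e1]
    _ = bc3 * B ^ 3 * c ^ 2 := by ring

theorem prob_some_pair_overlap_ge_three (N b n : ℕ) (hN : 3 ≤ N) (hb : 3 ≤ b)
    (hbN : b ≤ N) (hn : 2 ≤ n) :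
    ((univ.filter (fun I : Fin n → {s : Finset (Fin N) // s.card = b} =>
        ∃ i j, i ≠ j ∧ 3 ≤ ((I i).1 ∩ (I j).1).card)).card : ℝ)
      / ((N.choose b : ℝ)) ^ n
    ≤ (n.choose 2 : ℝ) * (b.choose 3 : ℝ) * ((b : ℝ) / ((N : ℝ) - 2)) ^ 3 := by
  classical
  have hCpos : 0 < N.choose b := Nat.choose_pos hbN
  -- the key counting bound
  have key : (univ.filter (fun I : Fin n → {s : Finset (Fin N) // s.card = b} =>
        ∃ i j, i ≠ j ∧ 3 ≤ ((I i).1 ∩ (I j).1).card)).card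
      ≤ n.choose 2 * (N.choose 3 *
          (((N - 3).choose (b - 3)) ^ 2 * (N.choose b) ^ (n - 2))) := by
    have hsub : (univ.filter (fun I : Fin n → {s : Finset (Fin N) // s.card = b} =>
          ∃ i j, i ≠ j ∧ 3 ≤ ((I i).1 ∩ (I j).1).card))
        ⊆ ((univ : Finset (Fin n)).powersetCard 2).biUnion (fun s =>
            univ.filter (fun I : Fin n → {s : Finset (Fin N) // s.card = b} =>
              ∃ i ∈ s, ∃ j ∈ s, i ≠ j ∧ 3 ≤ ((I i).1 ∩ (I j).1).card)) := by
      intro I hI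
      simp only [mem_filter, mem_univ, true_and] at hI
      obtain ⟨i, j, hij, h3⟩ := hI
      rw [mem_biUnion]
      refine ⟨{i, j}, ?_, ?_⟩
      · rw [mem_powersetCard]
        exact ⟨subset_univ _, by rw [card_insert_of_notMem (by simpa using hij),
          card_singleton]⟩
      · simp only [mem_filter, mem_univ, true_and]
        exact ⟨i, by simp, j, by simp, hij, h3⟩
    calc (univ.filter (fun I : Fin n → {s : Finset (Fin N) // s.card = b} =>
          ∃ i j, i ≠ j ∧ 3 ≤ ((I i).1 ∩ (I j).1).card)).card
        ≤ ∑ s ∈ (univ : Finset (Fin n)).powersetCard 2,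
            (univ.filter (fun I : Fin n → {s : Finset (Fin N) // s.card = b} =>
              ∃ i ∈ s, ∃ j ∈ s, i ≠ j ∧ 3 ≤ ((I i).1 ∩ (I j).1).card)).card :=
          le_trans (card_le_card hsub) (card_biUnion_le)
      _ ≤ ∑ _s ∈ (univ : Finset (Fin n)).powersetCard 2,
            (N.choose 3 * (((N - 3).choose (b - 3)) ^ 2 * (N.choose b) ^ (n - 2))) := by
          apply Finset.sum_le_sum
          intro s hs
          rw [mem_powersetCard] at hs
          obtain ⟨i, j, hij, rfl⟩ := card_eq_two.1 hs.2
          have hsub2 : (univ.filter (fun I : Fin n → {s : Finset (Fin N) // s.card = b} =>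
                ∃ a ∈ ({i, j} : Finset (Fin n)), ∃ c ∈ ({i, j} : Finset (Fin n)),
                  a ≠ c ∧ 3 ≤ ((I a).1 ∩ (I c).1).card))
              ⊆ ((univ : Finset (Fin N)).powersetCard 3).biUnion (fun T =>
                  univ.filter (fun I : Fin n → {s : Finset (Fin N) // s.card = b} =>
                    T ⊆ (I i).1 ∧ T ⊆ (I j).1)) := by
            intro I hI
            simp only [mem_filter, mem_univ, true_and, mem_insert, mem_singleton] at hI
            obtain ⟨a, ha, c, hc, hac, h3⟩ := hI
            have h3' : 3 ≤ ((I i).1 ∩ (I j).1).card := by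
              rcases ha with rfl | rfl <;> rcases hc with rfl | rfl
              · exact absurd rfl hac
              · exact h3
              · rwa [inter_comm]
              · exact absurd rfl hac
            obtain ⟨T, hT, hTcard⟩ := Finset.exists_subset_card_eq h3'
            rw [mem_biUnion]
            refine ⟨T, ?_, ?_⟩
            · rw [mem_powersetCard]; exact ⟨subset_univ _, hTcard⟩
            · simp only [mem_filter, mem_univ, true_and]
              exact ⟨hT.trans inter_subset_left, hT.trans inter_subset_right⟩
          calc (univ.filter (fun I : Fin n → {s : Finset (Fin N) // s.card = b} =>
                ∃ a ∈ ({i, j} : Finset (Fin n)), ∃ c ∈ ({i, j} : Finset (Fin n)),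
                  a ≠ c ∧ 3 ≤ ((I a).1 ∩ (I c).1).card)).card
              ≤ ∑ T ∈ (univ : Finset (Fin N)).powersetCard 3,
                  (univ.filter (fun I : Fin n → {s : Finset (Fin N) // s.card = b} =>
                    T ⊆ (I i).1 ∧ T ⊆ (I j).1)).card :=
                le_trans (card_le_card hsub2) (card_biUnion_le)
            _ = ∑ _T ∈ (univ : Finset (Fin N)).powersetCard 3,
                  (((N - 3).choose (b - 3)) ^ 2 * (N.choose b) ^ (n - 2)) := by
                apply Finset.sum_congr rfl
                intro T hT
                rw [mem_powersetCard] at hT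
                rw [count_pair N b n i j hij T, count_supersets N b T (hT.2 ▸ hb), hT.2]
            _ = N.choose 3 * (((N - 3).choose (b - 3)) ^ 2 * (N.choose b) ^ (n - 2)) := by
                rw [Finset.sum_const, card_powersetCard, card_univ, Fintype.card_fin,
                  smul_eq_mul]
      _ = n.choose 2 * (N.choose 3 *
            (((N - 3).choose (b - 3)) ^ 2 * (N.choose b) ^ (n - 2))) := by
          rw [Finset.sum_const, card_powersetCard, card_univ, Fintype.card_fin, smul_eq_mul]
  -- pass to the reals
  have hc : (0:ℝ) < (N.choose b : ℝ) := by exact_mod_cast hCpos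
  have hN3 : (3:ℝ) ≤ (N:ℝ) := by exact_mod_cast hN
  have hx : (0:ℝ) < (N:ℝ) - 2 := by linarith
  have hb3 : (3:ℝ) ≤ (b:ℝ) := by exact_mod_cast hb
  have step1 : ((univ.filter (fun I : Fin n → {s : Finset (Fin N) // s.card = b} =>
        ∃ i j, i ≠ j ∧ 3 ≤ ((I i).1 ∩ (I j).1).card)).card : ℝ) / (N.choose b : ℝ) ^ n
      ≤ ((n.choose 2 : ℝ) * ((N.choose 3 : ℝ) * (((N - 3).choose (b - 3) : ℝ) ^ 2
          * (N.choose b : ℝ) ^ (n - 2)))) / (N.choose b : ℝ) ^ n := by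
    apply div_le_div_of_nonneg_right _ (by positivity)
    · exact_mod_cast key
  refine le_trans step1 ?_
  have hpow : (N.choose b : ℝ) ^ n = (N.choose b : ℝ) ^ (n - 2) * (N.choose b : ℝ) ^ 2 := by
    rw [← pow_add, Nat.sub_add_cancel hn]
  have hfrac : ((n.choose 2 : ℝ) * ((N.choose 3 : ℝ) * (((N - 3).choose (b - 3) : ℝ) ^ 2
          * (N.choose b : ℝ) ^ (n - 2)))) / (N.choose b : ℝ) ^ n
      = (n.choose 2 : ℝ) * ((N.choose 3 : ℝ) * ((N - 3).choose (b - 3) : ℝ) ^ 2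
          / (N.choose b : ℝ) ^ 2) := by
    rw [hpow]
    field_simp
  rw [hfrac, mul_assoc]
  apply mul_le_mul_of_nonneg_left _ (by positivity)
  rw [div_pow]
  have hid : N.choose b * b.choose 3 = N.choose 3 * (N - 3).choose (b - 3) :=
    Nat.choose_mul hb
  apply final_real_ineq _ _ _ _ _ _ hc hx (by positivity) hb3
  · exact_mod_cast hid.symm
  · exact six_choose_three_real b hb
  · have h := six_choose_three_real N hN
    linarith [h]
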